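/- For 1 ≤ k ≤ N and 0 ≤ γ ≤ N, the probability that the component of a fixed vertex in G_{N,γ/N} has size exactly k is at most (k^{k−1}/k!)·γ^{k−1}·e^{−kγ + γk²/N}. -/

import Mathlib

/-- The probability of an event `A` when each coordinate `e : E` is an
independent Bernoulli(`p`) bit. -/
noncomputable def bernoulliPr {E : Type*} [Fintype E] [DecidableEq E]
    (p : ℝ) (A : Set (E → Bool)) : ℝ :=
  ∑ ω : E → Bool,
    Set.indicator A (fun ω' => ∏ e : E, if ω' e = true then p else 1 - p) ω

/-- The random graph `G_{N,q}` encoded by a configuration of edge-bits. -/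
def graphOf {N : ℕ} (η : Sym2 (Fin N) → Bool) : SimpleGraph (Fin N) :=
  SimpleGraph.fromRel fun a b => η s(a, b) = true

open Finset

namespace RG

variable {α : Type*} [LinearOrder α] [DecidableEq α]

/-- `v` reaches `x` under iteration of `f`. -/
def Reaches (f : α → α) (x v : α) : Prop := ∃ n, f^[n] v = x

/-- `f` is the parent function of a tree on vertex set `S` rooted at `x`. -/
def IsRooted (S : Finset α) (x : α) (f : α → α) : Prop :=
  (∀ v, v ∉ S.erase x → f v = v) ∧ (∀ v ∈ S.erase x, f v ∈ S) ∧ (∀ v ∈ S, Reaches f x v)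

lemma IsRooted.iterate_mem {S : Finset α} {x : α} {f : α → α} (h : IsRooted S x f)
    {v : α} (hv : v ∈ S) (n : ℕ) : f^[n] v ∈ S := by
  induction n with
  | zero => simpa
  | succ n ih =>
      rw [Function.iterate_succ_apply']
      by_cases hm : f^[n] v ∈ S.erase x
      · exact h.2.1 _ hm
      · rwa [h.1 _ hm]

lemma IsRooted.no_swap {S : Finset α} {x : α} {f : α → α} (h : IsRooted S x f)
    {v w : α} (hv : v ∈ S.erase x) (hw : w ∈ S.erase x) (hfv : f v = w) (hfw : f w = v) :
    False := by
  have key : ∀ n, f^[n] v = v ∨ f^[n] v = w := by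
    intro n
    induction n with
    | zero => exact Or.inl rfl
    | succ n ih =>
        rw [Function.iterate_succ_apply']
        rcases ih with h1 | h1 <;> rw [h1] <;> simp [hfv, hfw]
  obtain ⟨n, hn⟩ := h.2.2 v (mem_of_mem_erase hv)
  rcases key n with h1 | h1 <;> rw [hn] at h1
  · exact (mem_erase.mp hv).1 h1.symm
  · exact (mem_erase.mp hw).1 h1.symm

lemma IsRooted.ne_self {S : Finset α} {x : α} {f : α → α} (h : IsRooted S x f)
    {v : α} (hv : v ∈ S.erase x) : f v ≠ v :=
  fun hfv => h.no_swap hv hv hfv hfv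

/-- If `S.card = 2` then the unique non-root vertex points to the root. -/
lemma IsRooted.eq_root_of_card_two {S : Finset α} {x : α} {f : α → α} (h : IsRooted S x f)
    (hx : x ∈ S) (h2 : S.card = 2) {v : α} (hv : v ∈ S.erase x) : f v = x := by
  obtain ⟨hvx, hvS⟩ := mem_erase.mp hv
  have hsub : {x, v} ⊆ S := by
    intro a ha
    rcases mem_insert.mp ha with rfl | ha
    · exact hx
    · rwa [mem_singleton.mp ha]
  have hS : S = {x, v} := (eq_of_subset_of_card_le hsub (by
    rw [h2, card_insert_of_notMem (by simpa using (Ne.symm hvx)), card_singleton])).symm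
  have := h.2.1 v hv
  rw [hS, mem_insert, mem_singleton] at this
  rcases this with h1 | h1
  · exact h1
  · exact absurd h1 (h.ne_self hv)

/-- The leaves of the rooted tree `(S, x, f)`. -/
def leavesF (S : Finset α) (x : α) (f : α → α) : Finset α :=
  (S.erase x) \ ((S.erase x).image f)

lemma leavesF_subset (S : Finset α) (x : α) (f : α → α) : leavesF S x f ⊆ S.erase x :=
  sdiff_subset

lemma leavesF_nonempty {S : Finset α} {x : α} {f : α → α} (hx : x ∈ S)
    (h2 : 2 ≤ S.card) (h : IsRooted S x f) : (leavesF S x f).Nonempty := by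
  rw [nonempty_iff_ne_empty]
  intro hemp
  have hsub : S.erase x ⊆ (S.erase x).image f := by
    rwa [leavesF, sdiff_eq_empty_iff_subset] at hemp
  have himg : S.erase x = (S.erase x).image f :=
    eq_of_subset_of_card_le hsub card_image_le
  -- pick any v in S.erase x
  have hne : (S.erase x).Nonempty := by
    rw [← card_pos, card_erase_of_mem hx]; omega
  obtain ⟨v, hv⟩ := hne
  obtain ⟨hvx, hvS⟩ := mem_erase.mp hv
  -- minimal n with f^[n] v = x
  have hex : ∃ n, f^[n] v = x := h.2.2 v hvS
  set n₀ := Nat.find hex with hn₀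
  have hn₀pos : n₀ ≠ 0 := by
    intro h0
    have := Nat.find_spec hex
    rw [← hn₀, h0] at this
    exact hvx this
  set w := f^[n₀ - 1] v with hw
  have hwS : w ∈ S := h.iterate_mem hvS _
  have hwx : w ≠ x := Nat.find_min hex (by omega)
  have hfw : f w = x := by
    have h1 : f^[n₀ - 1 + 1] v = f (f^[n₀ - 1] v) := Function.iterate_succ_apply' f _ v
    have h2' : n₀ - 1 + 1 = n₀ := by omega
    rw [hw, ← h1, h2']
    exact Nat.find_spec hex
  have : x ∈ (S.erase x).image f := mem_image.mpr ⟨w, mem_erase.mpr ⟨hwx, hwS⟩, hfw⟩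
  rw [← himg] at this
  exact (mem_erase.mp this).1 rfl


/-- The (rooted) Prüfer code of the rooted tree `(S, x, f)`:
repeatedly record the parent of the smallest leaf and delete that leaf,
stopping when at most two vertices remain. -/
noncomputable def code (x : α) (S : Finset α) (f : α → α) : List α :=
  if h : 2 < S.card ∧ (leavesF S x f).Nonempty then
    f ((leavesF S x f).min' h.2) ::
      code x (S.erase ((leavesF S x f).min' h.2))
        (Function.update f ((leavesF S x f).min' h.2) ((leavesF S x f).min' h.2))
  else []
termination_by S.card
decreasing_by
  exact card_erase_lt_of_mem
    (mem_of_mem_erase (leavesF_subset S x f (Finset.min'_mem _ h.2)))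

lemma code_eq_nil {x : α} {S : Finset α} {f : α → α} (h : ¬ 2 < S.card) :
    code x S f = [] := by
  rw [code, dif_neg (by tauto)]

lemma code_eq_cons {x : α} {S : Finset α} {f : α → α} (h2 : 2 < S.card)
    (hne : (leavesF S x f).Nonempty) :
    code x S f = f ((leavesF S x f).min' hne) ::
      code x (S.erase ((leavesF S x f).min' hne))
        (Function.update f ((leavesF S x f).min' hne) ((leavesF S x f).min' hne)) := by
  rw [code, dif_pos ⟨h2, hne⟩]

/-- Deleting a leaf preserves being a rooted tree. -/
lemma IsRooted.step {S : Finset α} {x : α} {f : α → α} (hr : IsRooted S x f)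
    {ℓ : α} (hℓ : ℓ ∈ leavesF S x f) :
    IsRooted (S.erase ℓ) x (Function.update f ℓ ℓ) := by
  have hℓe : ℓ ∈ S.erase x := leavesF_subset S x f hℓ
  have hℓimg : ℓ ∉ (S.erase x).image f := (mem_sdiff.mp hℓ).2
  obtain ⟨hℓx, hℓS⟩ := mem_erase.mp hℓe
  have hmem : ∀ v, v ∈ (S.erase ℓ).erase x ↔ v ∈ S.erase x ∧ v ≠ ℓ := by
    intro v; simp only [mem_erase]; tauto
  refine ⟨?_, ?_, ?_⟩
  · intro v hv
    by_cases hvℓ : v = ℓ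
    · subst hvℓ; simp
    · rw [Function.update_of_ne hvℓ]
      refine hr.1 v fun hv' => hv ((hmem v).mpr ⟨hv', hvℓ⟩)
  · intro v hv
    obtain ⟨hv', hvℓ⟩ := (hmem v).mp hv
    rw [Function.update_of_ne hvℓ]
    refine mem_erase.mpr ⟨?_, hr.2.1 v hv'⟩
    intro hfv
    exact hℓimg (mem_image.mpr ⟨v, hv', hfv⟩)
  · intro v hv
    obtain ⟨hvℓ, hvS⟩ := mem_erase.mp hv
    have key : ∀ n, f^[n] v ≠ ℓ ∧ (Function.update f ℓ ℓ)^[n] v = f^[n] v := by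
      intro n
      induction n with
      | zero => exact ⟨hvℓ, rfl⟩
      | succ n ih =>
          obtain ⟨ih1, ih2⟩ := ih
          have hwS : f^[n] v ∈ S := hr.iterate_mem hvS n
          constructor
          · rw [Function.iterate_succ_apply']
            by_cases hw : f^[n] v ∈ S.erase x
            · intro hc
              exact hℓimg (mem_image.mpr ⟨_, hw, hc⟩)
            · rw [hr.1 _ hw]; exact ih1
          · rw [Function.iterate_succ_apply', Function.iterate_succ_apply', ih2,
              Function.update_of_ne ih1]
    obtain ⟨n, hn⟩ := hr.2.2 v hvS
    exact ⟨n, (key n).2.trans hn⟩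

lemma code_length {x : α} : ∀ (n : ℕ) (S : Finset α) (f : α → α), S.card ≤ n →
    x ∈ S → IsRooted S x f → (code x S f).length = S.card - 2 := by
  intro n
  induction n with
  | zero => intro S f h hx _; have := card_pos.mpr ⟨x, hx⟩; omega
  | succ n ih =>
      intro S f hcard hx hr
      by_cases h2 : 2 < S.card
      · have hne := leavesF_nonempty hx (by omega) hr
        set ℓ := (leavesF S x f).min' hne with hℓdef
        have hℓe : ℓ ∈ S.erase x := leavesF_subset S x f (min'_mem _ hne)
        obtain ⟨hℓx, hℓS⟩ := mem_erase.mp hℓe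
        rw [code_eq_cons h2 hne, List.length_cons, ← hℓdef,
          ih (S.erase ℓ) _ (by rw [card_erase_of_mem hℓS]; omega)
            (mem_erase.mpr ⟨Ne.symm hℓx, hx⟩) (hr.step (min'_mem _ hne)),
          card_erase_of_mem hℓS]
        omega
      · rw [code_eq_nil h2, List.length_nil]; omega

lemma code_subset {x : α} : ∀ (n : ℕ) (S : Finset α) (f : α → α), S.card ≤ n →
    x ∈ S → IsRooted S x f → ∀ a ∈ code x S f, a ∈ S := by
  intro n
  induction n with
  | zero => intro S f h hx _; have := card_pos.mpr ⟨x, hx⟩; omega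
  | succ n ih =>
      intro S f hcard hx hr a ha
      by_cases h2 : 2 < S.card
      · have hne := leavesF_nonempty hx (by omega) hr
        set ℓ := (leavesF S x f).min' hne with hℓdef
        have hℓe : ℓ ∈ S.erase x := leavesF_subset S x f (min'_mem _ hne)
        obtain ⟨hℓx, hℓS⟩ := mem_erase.mp hℓe
        rw [code_eq_cons h2 hne, ← hℓdef] at ha
        rcases List.mem_cons.mp ha with rfl | ha
        · exact hr.2.1 ℓ hℓe
        · exact mem_of_mem_erase (ih (S.erase ℓ) _
            (by rw [card_erase_of_mem hℓS]; omega)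
            (mem_erase.mpr ⟨Ne.symm hℓx, hx⟩) (hr.step (min'_mem _ hne)) a ha)
      · rw [code_eq_nil h2] at ha; exact absurd ha List.not_mem_nil

lemma leavesF_eq {x : α} : ∀ (n : ℕ) (S : Finset α) (f : α → α), S.card ≤ n →
    x ∈ S → IsRooted S x f → 2 ≤ S.card →
    leavesF S x f = S \ insert x (code x S f).toFinset := by
  intro n
  induction n with
  | zero => intro S f h hx _ _; have := card_pos.mpr ⟨x, hx⟩; omega
  | succ n ih =>
      intro S f hcard hx hr h2'
      by_cases h2 : 2 < S.card
      · have hne := leavesF_nonempty hx (by omega) hr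
        set ℓ := (leavesF S x f).min' hne with hℓdef
        have hℓleaf : ℓ ∈ leavesF S x f := min'_mem _ hne
        have hℓe : ℓ ∈ S.erase x := leavesF_subset S x f hℓleaf
        have hℓimg : ℓ ∉ (S.erase x).image f := (mem_sdiff.mp hℓleaf).2
        obtain ⟨hℓx, hℓS⟩ := mem_erase.mp hℓe
        set S' := S.erase ℓ with hS'def
        set f' := Function.update f ℓ ℓ with hf'def
        have hr' : IsRooted S' x f' := hr.step hℓleaf
        have hx' : x ∈ S' := mem_erase.mpr ⟨Ne.symm hℓx, hx⟩
        have hcard' : S'.card = S.card - 1 := card_erase_of_mem hℓS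
        have IH := ih S' f' (by omega) hx' hr' (by omega)
        have htail : ∀ a ∈ code x S' f', a ∈ S' :=
          code_subset n S' f' (by omega) hx' hr'
        have hfℓS : f ℓ ∈ S := hr.2.1 ℓ hℓe
        rw [code_eq_cons h2 hne, ← hℓdef, ← hS'def, ← hf'def]
        ext v
        simp only [leavesF, mem_sdiff, mem_erase, mem_image, List.toFinset_cons,
          mem_insert, List.mem_toFinset, not_exists, not_and, not_or]
        constructor
        · rintro ⟨⟨hvx, hvS⟩, hvimg⟩
          refine ⟨hvS, hvx, ?_, ?_⟩
          · rintro rfl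
            exact hvimg ℓ ⟨hℓx, hℓS⟩ rfl
          · intro hvtail
            have hvS' : v ∈ S' := htail v hvtail
            have hvleaf : v ∈ leavesF S' x f' := by
              simp only [leavesF, mem_sdiff, mem_erase, mem_image, not_exists, not_and]
              refine ⟨⟨hvx, hvS'⟩, ?_⟩
              rintro w ⟨hwx, hwS'⟩ hfw
              obtain ⟨hwℓ, hwS⟩ := mem_erase.mp hwS'
              rw [hf'def, Function.update_of_ne hwℓ] at hfw
              exact hvimg w ⟨hwx, hwS⟩ hfw
            rw [IH] at hvleaf
            have := (mem_sdiff.mp hvleaf).2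
            simp only [mem_insert, List.mem_toFinset, not_or] at this
            exact this.2 hvtail
        · rintro ⟨hvS, hvx, hvfℓ, hvtail⟩
          refine ⟨⟨hvx, hvS⟩, ?_⟩
          rintro w ⟨hwx, hwS⟩ hfw
          by_cases hwℓ : w = ℓ
          · subst hwℓ; exact hvfℓ hfw.symm
          · have hvℓ : v ≠ ℓ := by
              rintro rfl
              exact hℓimg (mem_image.mpr ⟨w, mem_erase.mpr ⟨hwx, hwS⟩, hfw⟩)
            have hvS' : v ∈ S' := mem_erase.mpr ⟨hvℓ, hvS⟩
            have hvnleaf : v ∉ leavesF S' x f' := by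
              intro hleaf
              exact (mem_sdiff.mp hleaf).2 (mem_image.mpr
                ⟨w, mem_erase.mpr ⟨hwx, mem_erase.mpr ⟨hwℓ, hwS⟩⟩, by
                  rw [hf'def, Function.update_of_ne hwℓ]; exact hfw⟩)
            exact hvnleaf (by
              rw [IH]
              exact mem_sdiff.mpr ⟨hvS', by
                simp only [mem_insert, List.mem_toFinset, not_or]
                exact ⟨hvx, hvtail⟩⟩)
      · -- S.card = 2
        have hcard2 : S.card = 2 := by omega
        have himg : ∀ w ∈ S.erase x, f w = x := fun w hw =>
          hr.eq_root_of_card_two hx hcard2 hw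
        rw [code_eq_nil h2]
        ext v
        simp only [leavesF, mem_sdiff, mem_erase, mem_image, not_exists, not_and,
          List.toFinset_nil, insert_empty_eq, mem_singleton]
        constructor
        · rintro ⟨⟨hvx, hvS⟩, _⟩
          exact ⟨hvS, hvx⟩
        · rintro ⟨hvS, hvx⟩
          refine ⟨⟨hvx, hvS⟩, ?_⟩
          rintro w ⟨hwx, hwS⟩ hfw
          have hwx' := himg w (mem_erase.mpr ⟨hwx, hwS⟩)
          rw [hfw] at hwx'
          exact hvx hwx'

lemma code_inj {x : α} : ∀ (n : ℕ) (S : Finset α) (f g : α → α), S.card ≤ n →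
    x ∈ S → IsRooted S x f → IsRooted S x g → code x S f = code x S g → f = g := by
  intro n
  induction n with
  | zero => intro S f g h hx _ _ _; have := card_pos.mpr ⟨x, hx⟩; omega
  | succ n ih =>
      intro S f g hcard hx hrf hrg hcode
      by_cases h2 : 2 < S.card
      · have hnef := leavesF_nonempty hx (by omega) hrf
        have hneg := leavesF_nonempty hx (by omega) hrg
        have hleq : leavesF S x f = leavesF S x g := by
          rw [leavesF_eq (S.card) S f le_rfl hx hrf (by omega),
            leavesF_eq (S.card) S g le_rfl hx hrg (by omega), hcode]
        have hℓeq : (leavesF S x f).min' hnef = (leavesF S x g).min' hneg := by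
          congr 1
        set ℓ := (leavesF S x f).min' hnef with hℓdef
        have hℓleaf : ℓ ∈ leavesF S x f := min'_mem _ hnef
        have hℓe : ℓ ∈ S.erase x := leavesF_subset S x f hℓleaf
        obtain ⟨hℓx, hℓS⟩ := mem_erase.mp hℓe
        rw [code_eq_cons h2 hnef, code_eq_cons h2 hneg] at hcode
        rw [← hℓeq] at hcode
        rw [← hℓdef] at hcode
        obtain ⟨hhead, htails⟩ := List.cons.injEq _ _ _ _ ▸ hcode
        have hupd := ih (S.erase ℓ) _ _ (by rw [card_erase_of_mem hℓS]; omega)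
          (mem_erase.mpr ⟨Ne.symm hℓx, hx⟩) (hrf.step hℓleaf)
          (hrg.step (hleq ▸ hℓleaf)) htails
        funext v
        by_cases hvℓ : v = ℓ
        · subst hvℓ; exact hhead
        · have := congrFun hupd v
          rwa [Function.update_of_ne hvℓ, Function.update_of_ne hvℓ] at this
      · -- S.card ≤ 2
        funext v
        by_cases hv : v ∈ S.erase x
        · obtain ⟨hvx, hvS⟩ := mem_erase.mp hv
          have h1 : 1 < S.card := one_lt_card.mpr ⟨x, hx, v, hvS, Ne.symm hvx⟩
          have hc : S.card = 2 := by omega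
          rw [hrf.eq_root_of_card_two hx hc hv, hrg.eq_root_of_card_two hx hc hv]
        · rw [hrf.1 v hv, hrg.1 v hv]

open scoped Classical in
/-- **Cayley-type bound**: at most `k^(k-2)` rooted trees on a `k`-set with given root. -/
lemma card_rooted_le {α : Type*} [LinearOrder α] [DecidableEq α] [Fintype α] {S : Finset α} {x : α} {k : ℕ}
    (hx : x ∈ S) (hk : S.card = k) :
    (univ.filter (fun f : α → α => IsRooted S x f)).card ≤ k ^ (k - 2) := by
  classical
  have hinj : ∀ f ∈ univ.filter (fun f : α → α => IsRooted S x f),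
      (fun i : Fin (k - 2) => (code x S f).getD i x) ∈
        Fintype.piFinset (fun _ : Fin (k - 2) => S) := by
    intro f hf
    rw [mem_filter] at hf
    rw [Fintype.mem_piFinset]
    intro i
    by_cases hi : (i : ℕ) < (code x S f).length
    · rw [List.getD_eq_getElem _ _ hi]
      exact code_subset S.card S f le_rfl hx hf.2 _ (List.getElem_mem hi)
    · rw [List.getD_eq_default _ _ (by omega)]
      exact hx
  have hinjOn : Set.InjOn (fun f : α → α => fun i : Fin (k - 2) => (code x S f).getD i x)
      (univ.filter (fun f : α → α => IsRooted S x f)) := by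
    intro f hf g hg hfg
    simp only [coe_filter, Set.mem_setOf_eq, mem_univ, true_and] at hf hg
    have hlf : (code x S f).length = k - 2 := by
      rw [code_length S.card S f le_rfl hx hf, hk]
    have hlg : (code x S g).length = k - 2 := by
      rw [code_length S.card S g le_rfl hx hg, hk]
    have hcode : code x S f = code x S g := by
      apply List.ext_getElem (by rw [hlf, hlg])
      intro i h1 h2
      have hik : i < k - 2 := by omega
      have := congrFun hfg ⟨i, hik⟩
      simp only at this
      rwa [List.getD_eq_getElem _ _ h1, List.getD_eq_getElem _ _ h2] at this
    exact code_inj S.card S f g le_rfl hx hf hg hcode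
  calc (univ.filter (fun f : α → α => IsRooted S x f)).card
      ≤ (Fintype.piFinset (fun _ : Fin (k - 2) => S)).card :=
        card_le_card_of_injOn _ hinj hinjOn
    _ = k ^ (k - 2) := by
        rw [Fintype.card_piFinset]
        simp [hk]

lemma exists_closer {V : Type*} {G : SimpleGraph V} {x v : V}
    (hxv : G.Reachable x v) (hne : v ≠ x) :
    ∃ w, G.Adj v w ∧ G.dist x w < G.dist x v := by
  obtain ⟨p, hp⟩ := hxv.exists_walk_length_eq_dist
  obtain ⟨w, hadj, q, hq⟩ := SimpleGraph.Walk.exists_eq_cons_of_ne hne p.reverse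
  refine ⟨w, hadj, ?_⟩
  have h1 : G.dist x w ≤ q.reverse.length := SimpleGraph.dist_le _
  have h2 : p.reverse.length = q.length + 1 := by rw [hq, SimpleGraph.Walk.length_cons]
  rw [SimpleGraph.Walk.length_reverse] at h1 h2
  omega


section Prob
variable {E : Type*} [Fintype E] [DecidableEq E]
variable {E : Type*} [Fintype E] [DecidableEq E]

lemma weight_nonneg {p : ℝ} (hp0 : 0 ≤ p) (hp1 : p ≤ 1) (ω : E → Bool) :
    0 ≤ ∏ e : E, if ω e = true then p else 1 - p :=
  prod_nonneg fun e _ => by split <;> [exact hp0; linarith]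

/-- Union bound for `bernoulliPr`. -/
lemma bernoulliPr_le_sum {p : ℝ} (hp0 : 0 ≤ p) (hp1 : p ≤ 1)
    (A : Set (E → Bool)) {ι : Type*} (I : Finset ι) (B : ι → Set (E → Bool))
    (hA : ∀ ω ∈ A, ∃ i ∈ I, ω ∈ B i) :
    bernoulliPr p A ≤ ∑ i ∈ I, bernoulliPr p (B i) := by
  unfold bernoulliPr
  rw [Finset.sum_comm]
  apply Finset.sum_le_sum
  intro ω _
  set w : (E → Bool) → ℝ := fun ω' => ∏ e : E, if ω' e = true then p else 1 - p with hw
  by_cases hω : ω ∈ A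
  · obtain ⟨i₀, hi₀I, hi₀⟩ := hA ω hω
    calc Set.indicator A w ω = Set.indicator (B i₀) w ω := by
          rw [Set.indicator_of_mem hω, Set.indicator_of_mem hi₀]
      _ ≤ ∑ i ∈ I, Set.indicator (B i) w ω :=
          Finset.single_le_sum (fun i _ => Set.indicator_nonneg
            (fun ω' _ => weight_nonneg hp0 hp1 ω') ω) hi₀I
  · rw [Set.indicator_of_notMem hω]
    exact Finset.sum_nonneg fun i _ => Set.indicator_nonneg
      (fun ω' _ => weight_nonneg hp0 hp1 ω') ω

/-- The probability of a cylinder event. -/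
lemma bernoulliPr_cylinder {p : ℝ} (hp0 : 0 ≤ p) (hp1 : p ≤ 1)
    (T X : Finset E) (hTX : Disjoint T X) :
    bernoulliPr p {η : E → Bool | (∀ e ∈ T, η e = true) ∧ (∀ e ∈ X, η e = false)} =
      p ^ T.card * (1 - p) ^ X.card := by
  classical
  set A : Set (E → Bool) := {η | (∀ e ∈ T, η e = true) ∧ (∀ e ∈ X, η e = false)} with hA
  set F : E → Bool → ℝ := fun e b =>
    (if b = true then p else 1 - p) *
      (if e ∈ T then (if b then 1 else 0) else if e ∈ X then (if b then 0 else 1) else 1)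
    with hF
  have key : ∀ ω : E → Bool,
      Set.indicator A (fun ω' => ∏ e : E, if ω' e = true then p else 1 - p) ω
        = ∏ e : E, F e (ω e) := by
    intro ω
    by_cases hω : ω ∈ A
    · rw [Set.indicator_of_mem hω, hF]
      rw [Finset.prod_mul_distrib]
      have h1 : (∏ e : E, (if e ∈ T then (if ω e then 1 else 0)
          else if e ∈ X then (if ω e then 0 else 1) else 1 : ℝ)) = 1 := by
        apply Finset.prod_eq_one
        intro e _
        by_cases heT : e ∈ T
        · simp [heT, hω.1 e heT]
        · by_cases heX : e ∈ X
          · simp [heT, heX, hω.2 e heX]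
          · simp [heT, heX]
      rw [h1, mul_one]
    · rw [Set.indicator_of_notMem hω]
      have : (∃ e ∈ T, ω e ≠ true) ∨ (∃ e ∈ X, ω e ≠ false) := by
        by_contra hc
        push_neg at hc
        exact hω ⟨hc.1, hc.2⟩
      rcases this with ⟨e, heT, he⟩ | ⟨e, heX, he⟩
      · refine (Finset.prod_eq_zero (mem_univ e) ?_).symm
        rw [hF]
        have : ω e = false := by simpa using he
        simp [heT, this]
      · refine (Finset.prod_eq_zero (mem_univ e) ?_).symm
        rw [hF]
        have : ω e = true := by simpa using he
        have heT : e ∉ T := fun h => (Finset.disjoint_left.mp hTX h) heX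
        simp [heT, heX, this]
  unfold bernoulliPr
  rw [Finset.sum_congr rfl fun ω _ => key ω]
  have swap : ∑ ω : E → Bool, ∏ e : E, F e (ω e) = ∏ e : E, ∑ b : Bool, F e b := by
    rw [Finset.prod_univ_sum]
    rw [← Fintype.piFinset_univ]
  rw [swap]
  have hval : ∀ e : E, (∑ b : Bool, F e b) =
      if e ∈ T then p else if e ∈ X then 1 - p else 1 := by
    intro e
    rw [Fintype.sum_bool, hF]
    by_cases heT : e ∈ T
    · simp [heT]
    · by_cases heX : e ∈ X <;> simp [heT, heX]
  rw [Finset.prod_congr rfl fun e _ => hval e]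
  rw [← Finset.prod_mul_prod_compl (T ∪ X)]
  have h2 : ∏ e ∈ (T ∪ X)ᶜ, (if e ∈ T then p else if e ∈ X then 1 - p else 1) = 1 := by
    apply Finset.prod_eq_one
    intro e he
    rw [Finset.mem_compl, Finset.mem_union] at he
    push_neg at he
    simp [he.1, he.2]
  rw [h2, mul_one, Finset.prod_union hTX]
  have h3 : ∏ e ∈ T, (if e ∈ T then p else if e ∈ X then 1 - p else 1) = p ^ T.card := by
    rw [Finset.prod_congr rfl (fun e he => if_pos he), Finset.prod_const]
  have h4 : ∏ e ∈ X, (if e ∈ T then p else if e ∈ X then 1 - p else 1) = (1 - p) ^ X.card := by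
    rw [Finset.prod_congr rfl (fun e he => ?_), Finset.prod_const]
    rw [if_neg (fun h => (Finset.disjoint_left.mp hTX h) he), if_pos he]
  rw [h3, h4]


end Prob

end RG

open Finset in
lemma RG.graphOf_adj {N : ℕ} (η : Sym2 (Fin N) → Bool) (a b : Fin N) :
    (graphOf η).Adj a b ↔ a ≠ b ∧ η s(a, b) = true := by
  show (SimpleGraph.fromRel _).Adj a b ↔ _
  rw [SimpleGraph.fromRel_adj]
  constructor
  · rintro ⟨h1, h2 | h2⟩
    · exact ⟨h1, h2⟩
    · exact ⟨h1, by rw [Sym2.eq_swap]; exact h2⟩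
  · rintro ⟨h1, h2⟩; exact ⟨h1, Or.inl h2⟩


open Finset RG

/-- For `1 ≤ k ≤ N` and `0 ≤ γ ≤ N`,
`Pr(|C(x)| = k in G_{N,γ/N}) ≤ (k^{k−1}/k!)·γ^{k−1}·e^{−kγ+γk²/N}`. -/
theorem component_size_prob_upper_bound (N k : ℕ) (γ : ℝ)
    (hγ0 : 0 ≤ γ) (hγN : γ ≤ (N : ℝ)) (hk1 : 1 ≤ k) (hkN : k ≤ N)
    (x : Fin N) :
    bernoulliPr (γ / N)
        {η : Sym2 (Fin N) → Bool | {y | (graphOf η).Reachable x y}.ncard = k} ≤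
      ((k : ℝ) ^ (k - 1) / (Nat.factorial k : ℝ)) * γ ^ (k - 1) *
        Real.exp (-(k : ℝ) * γ + γ * (k : ℝ) ^ 2 / N) := by
  classical
  have hN : 0 < N := Nat.lt_of_lt_of_le hk1 hkN
  have hNR : (0:ℝ) < N := by exact_mod_cast hN
  set p : ℝ := γ / N with hpdef
  have hp0 : 0 ≤ p := div_nonneg hγ0 hNR.le
  have hp1 : p ≤ 1 := by rw [hpdef, div_le_one hNR]; exact hγN
  set M : ℕ := k * (N - k) with hMdef
  set A : Set (Sym2 (Fin N) → Bool) :=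
    {η | {y | (graphOf η).Reachable x y}.ncard = k} with hAdef
  set T : Finset (Fin N) → (Fin N → Fin N) → Finset (Sym2 (Fin N)) :=
    fun S f => (S.erase x).image (fun v => s(v, f v)) with hTdef
  set XS : Finset (Fin N) → Finset (Sym2 (Fin N)) :=
    fun S => (S ×ˢ Sᶜ).image (fun q => s(q.1, q.2)) with hXSdef
  set 𝒮 : Finset (Finset (Fin N)) :=
    (univ.powersetCard k).filter (fun S => x ∈ S) with h𝒮def
  set I : Finset ((_ : Finset (Fin N)) × (Fin N → Fin N)) :=
    𝒮.sigma (fun S => univ.filter (fun f => IsRooted S x f)) with hIdef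
  set B : (Σ _ : Finset (Fin N), Fin N → Fin N) → Set (Sym2 (Fin N) → Bool) := fun i =>
    {η | (∀ e ∈ T i.1 i.2, η e = true) ∧ (∀ e ∈ XS i.1, η e = false)} with hBdef
  -- covering
  have hcover : ∀ η ∈ A, ∃ i ∈ I, η ∈ B i := by
    intro η hη
    set G := graphOf η with hGdef
    have hCfin : {y | G.Reachable x y}.Finite := Set.toFinite _
    set S := hCfin.toFinset with hSdef
    have hmemS : ∀ y, y ∈ S ↔ G.Reachable x y := fun y => hCfin.mem_toFinset
    have hxS : x ∈ S := (hmemS x).mpr (SimpleGraph.Reachable.refl x)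
    have hScard : S.card = k := by
      rw [hSdef, ← Set.ncard_eq_toFinset_card _ hCfin]
      exact hη
    have hch : ∀ v ∈ S.erase x, ∃ w, G.Adj v w ∧ G.dist x w < G.dist x v ∧ w ∈ S := by
      intro v hv
      obtain ⟨hvx, hvS⟩ := Finset.mem_erase.mp hv
      obtain ⟨w, hadj, hd⟩ := exists_closer ((hmemS v).mp hvS) hvx
      exact ⟨w, hadj, hd, (hmemS w).mpr (((hmemS v).mp hvS).trans hadj.reachable)⟩
    let f : Fin N → Fin N := fun v => if hv : v ∈ S.erase x then (hch v hv).choose else v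
    have hf_spec : ∀ v (hv : v ∈ S.erase x),
        G.Adj v (f v) ∧ G.dist x (f v) < G.dist x v ∧ f v ∈ S := by
      intro v hv
      have hfv : f v = (hch v hv).choose := dif_pos hv
      rw [hfv]
      exact (hch v hv).choose_spec
    have hfnot : ∀ v, v ∉ S.erase x → f v = v := fun v hv => dif_neg hv
    have hreach : ∀ n v, v ∈ S → G.dist x v ≤ n → Reaches f x v := by
      intro n
      induction n with
      | zero =>
          intro v hvS hd
          have h0 : G.dist x v = 0 := Nat.le_zero.mp hd
          have hvx : x = v := (SimpleGraph.Reachable.dist_eq_zero_iff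
            ((hmemS v).mp hvS)).mp h0
          exact ⟨0, hvx.symm⟩
      | succ n ih =>
          intro v hvS hd
          by_cases hvx : v = x
          · exact ⟨0, hvx⟩
          · have hv : v ∈ S.erase x := Finset.mem_erase.mpr ⟨hvx, hvS⟩
            obtain ⟨_, hlt, hmem⟩ := hf_spec v hv
            obtain ⟨m, hm⟩ := ih (f v) hmem (by omega)
            exact ⟨m + 1, by rw [Function.iterate_succ_apply]; exact hm⟩
    have hIsR : IsRooted S x f :=
      ⟨hfnot, fun v hv => (hf_spec v hv).2.2,
        fun v hv => hreach (G.dist x v) v hv le_rfl⟩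
    refine ⟨⟨S, f⟩, ?_, ?_, ?_⟩
    · exact Finset.mem_sigma.mpr ⟨Finset.mem_filter.mpr
        ⟨Finset.mem_powersetCard.mpr ⟨Finset.subset_univ S, hScard⟩, hxS⟩,
        Finset.mem_filter.mpr ⟨Finset.mem_univ f, hIsR⟩⟩
    · intro e he
      obtain ⟨v, hv, rfl⟩ := Finset.mem_image.mp he
      have hadj := (hf_spec v hv).1
      exact ((graphOf_adj η v (f v)).mp hadj).2
    · intro e he
      obtain ⟨⟨v, w⟩, hvw, rfl⟩ := Finset.mem_image.mp he
      obtain ⟨hvS, hwS⟩ := Finset.mem_product.mp hvw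
      have hwS' : w ∉ S := Finset.mem_compl.mp hwS
      by_contra hfalse
      have htrue : η s(v, w) = true := by
        cases hb : η s(v, w)
        · exact absurd hb hfalse
        · rfl
      have hadj : G.Adj v w := (graphOf_adj η v w).mpr
        ⟨fun h => hwS' (h ▸ hvS), htrue⟩
      exact hwS' ((hmemS w).mpr (((hmemS v).mp hvS).trans hadj.reachable))
  -- per-term probability
  have hterm : ∀ i ∈ I, bernoulliPr p (B i) = p ^ (k - 1) * (1 - p) ^ M := by
    rintro ⟨S, f⟩ hi
    obtain ⟨hS𝒮, hf⟩ := Finset.mem_sigma.mp hi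
    obtain ⟨hSp, hxS⟩ := Finset.mem_filter.mp hS𝒮
    have hScard : S.card = k := (Finset.mem_powersetCard.mp hSp).2
    have hr : IsRooted S x f := (Finset.mem_filter.mp hf).2
    have hTcard : (T S f).card = k - 1 := by
      rw [hTdef]
      rw [Finset.card_image_of_injOn, Finset.card_erase_of_mem hxS, hScard]
      intro v hv w hw heq
      simp only [Finset.mem_coe] at hv hw
      rcases Sym2.eq_iff.mp heq with ⟨h1, _⟩ | ⟨h1, h2⟩
      · exact h1
      · by_contra hne
        exact hr.no_swap hv hw h2 h1.symm
    have hXcard : (XS S).card = M := by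
      rw [hXSdef, hMdef]
      rw [Finset.card_image_of_injOn, Finset.card_product, Finset.card_compl,
        Fintype.card_fin, hScard]
      rintro ⟨v, w⟩ hvw ⟨v', w'⟩ hvw' heq
      simp only [Finset.mem_coe, Finset.mem_product] at hvw hvw'
      dsimp only at heq
      rcases Sym2.eq_iff.mp heq with ⟨h1, h2⟩ | ⟨h1, h2⟩
      · simp [Prod.ext_iff, h1, h2]
      · exact absurd (h1 ▸ hvw.1) (Finset.mem_compl.mp hvw'.2)
    have hdisj : Disjoint (T S f) (XS S) := by
      rw [Finset.disjoint_left]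
      rintro e heT heX
      obtain ⟨v, hv, rfl⟩ := Finset.mem_image.mp heT
      obtain ⟨⟨a, b⟩, hab, heq⟩ := Finset.mem_image.mp heX
      obtain ⟨haS, hbS⟩ := Finset.mem_product.mp hab
      have hbS' : b ∉ S := Finset.mem_compl.mp hbS
      have hfvS : f v ∈ S := hr.2.1 v hv
      have hvS : v ∈ S := Finset.mem_of_mem_erase hv
      dsimp only at heq
      rcases Sym2.eq_iff.mp heq with ⟨h1, h2⟩ | ⟨h1, h2⟩
      · exact hbS' (h2 ▸ hfvS)
      · exact hbS' (h2 ▸ hvS)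
    rw [hBdef]
    simpa [hTcard, hXcard] using bernoulliPr_cylinder hp0 hp1 (T S f) (XS S) hdisj
  -- cardinality of the index set
  have h𝒮card : 𝒮.card = (N - 1).choose (k - 1) := by
    have hbij : 𝒮.card = ((univ.erase x).powersetCard (k - 1)).card := by
      refine Finset.card_bij' (fun S _ => S.erase x) (fun S' _ => insert x S') ?_ ?_ ?_ ?_
      · intro S hS
        obtain ⟨hSp, hxS⟩ := Finset.mem_filter.mp hS
        obtain ⟨_, hScard⟩ := Finset.mem_powersetCard.mp hSp
        exact Finset.mem_powersetCard.mpr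
          ⟨Finset.erase_subset_erase x (Finset.subset_univ S),
           by rw [Finset.card_erase_of_mem hxS, hScard]⟩
      · intro S' hS'
        obtain ⟨hsub, hcard⟩ := Finset.mem_powersetCard.mp hS'
        have hxS' : x ∉ S' := fun h => (Finset.mem_erase.mp (hsub h)).1 rfl
        refine Finset.mem_filter.mpr ⟨Finset.mem_powersetCard.mpr
          ⟨Finset.subset_univ _, ?_⟩, Finset.mem_insert_self x S'⟩
        rw [Finset.card_insert_of_notMem hxS', hcard]
        omega
      · intro S hS
        exact Finset.insert_erase (Finset.mem_filter.mp hS).2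
      · intro S' hS'
        obtain ⟨hsub, _⟩ := Finset.mem_powersetCard.mp hS'
        exact Finset.erase_insert (fun h => (Finset.mem_erase.mp (hsub h)).1 rfl)
    rw [hbij, Finset.card_powersetCard, Finset.card_erase_of_mem (Finset.mem_univ x),
      Finset.card_univ, Fintype.card_fin]
  have hIcard : I.card ≤ (N - 1).choose (k - 1) * k ^ (k - 2) := by
    rw [hIdef, Finset.card_sigma]
    calc ∑ S ∈ 𝒮, (univ.filter (fun f => IsRooted S x f)).card
        ≤ ∑ S ∈ 𝒮, k ^ (k - 2) := by
          apply Finset.sum_le_sum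
          intro S hS
          obtain ⟨hSp, hxS⟩ := Finset.mem_filter.mp hS
          exact card_rooted_le hxS (Finset.mem_powersetCard.mp hSp).2
      _ = 𝒮.card * k ^ (k - 2) := by rw [Finset.sum_const, smul_eq_mul]
      _ = (N - 1).choose (k - 1) * k ^ (k - 2) := by rw [h𝒮card]
  -- the union bound
  have hub := bernoulliPr_le_sum hp0 hp1 A I B hcover
  -- exponential bound
  have hexp : (1 - p) ^ M ≤ Real.exp (-(k : ℝ) * γ + γ * (k : ℝ) ^ 2 / N) := by
    have h1p : 1 - p ≤ Real.exp (-p) := by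
      have := Real.add_one_le_exp (-p)
      linarith
    calc (1 - p) ^ M ≤ (Real.exp (-p)) ^ M := pow_le_pow_left₀ (by linarith) h1p M
      _ = Real.exp ((M : ℝ) * (-p)) := (Real.exp_nat_mul _ M).symm
      _ = Real.exp (-(k : ℝ) * γ + γ * (k : ℝ) ^ 2 / N) := by
          congr 1
          rw [hMdef, hpdef]
          push_cast [Nat.cast_sub hkN]
          field_simp
          ring
  -- choose bound
  have hchoose : ((N - 1).choose (k - 1) : ℝ) ≤ (N : ℝ) ^ (k - 1) / (k - 1).factorial := by
    rw [le_div_iff₀ (by exact_mod_cast (k - 1).factorial_pos)]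
    have hnat : (N - 1).choose (k - 1) * (k - 1).factorial ≤ N ^ (k - 1) := by
      calc (N - 1).choose (k - 1) * (k - 1).factorial
          = (N - 1).descFactorial (k - 1) := by
            rw [Nat.descFactorial_eq_factorial_mul_choose, Nat.mul_comm]
        _ ≤ (N - 1) ^ (k - 1) := Nat.descFactorial_le_pow _ _
        _ ≤ N ^ (k - 1) := Nat.pow_le_pow_left (Nat.sub_le N 1) _
    exact_mod_cast hnat
  have hkpow : (k : ℝ) ^ (k - 1) = k * (k : ℝ) ^ (k - 2) := by
    rcases Nat.lt_or_ge k 2 with h | h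
    · have hk : k = 1 := by omega
      subst hk; norm_num
    · have : k - 1 = (k - 2) + 1 := by omega
      rw [this, pow_succ]; ring
  have hkfact : (k.factorial : ℝ) = k * (k - 1).factorial := by
    have h : k.factorial = k * (k - 1).factorial := by
      conv_lhs => rw [show k = (k - 1) + 1 by omega]
      rw [Nat.factorial_succ]
      congr 2
      omega
    exact_mod_cast h
  -- final computation
  have hweight : (0:ℝ) ≤ p ^ (k - 1) * (1 - p) ^ M :=
    mul_nonneg (pow_nonneg hp0 _) (pow_nonneg (by linarith) _)
  calc bernoulliPr p A ≤ ∑ i ∈ I, bernoulliPr p (B i) := hub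
    _ = I.card * (p ^ (k - 1) * (1 - p) ^ M) := by
        rw [Finset.sum_congr rfl hterm, Finset.sum_const, nsmul_eq_mul]
    _ ≤ ((N - 1).choose (k - 1) * k ^ (k - 2) : ℕ) * (p ^ (k - 1) * (1 - p) ^ M) := by
        apply mul_le_mul_of_nonneg_right _ hweight
        exact_mod_cast hIcard
    _ = (((N - 1).choose (k - 1) : ℝ) * (k : ℝ) ^ (k - 2)) *
          ((γ ^ (k - 1) / (N : ℝ) ^ (k - 1)) * (1 - p) ^ M) := by
        push_cast
        rw [hpdef, div_pow]
    _ ≤ (((N : ℝ) ^ (k - 1) / (k - 1).factorial) * (k : ℝ) ^ (k - 2)) *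
          ((γ ^ (k - 1) / (N : ℝ) ^ (k - 1)) *
            Real.exp (-(k : ℝ) * γ + γ * (k : ℝ) ^ 2 / N)) := by
        apply mul_le_mul
        · exact mul_le_mul_of_nonneg_right hchoose (by positivity)
        · apply mul_le_mul_of_nonneg_left hexp (by positivity)
        · apply mul_nonneg (by positivity)
          exact pow_nonneg (by linarith) _
        · positivity
    _ = ((k : ℝ) ^ (k - 1) / (k.factorial : ℝ)) * γ ^ (k - 1) *
          Real.exp (-(k : ℝ) * γ + γ * (k : ℝ) ^ 2 / N) := by
        rw [hkpow, hkfact]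
        have hNpow : (N : ℝ) ^ (k - 1) ≠ 0 := by positivity
        have hfact : ((k - 1).factorial : ℝ) ≠ 0 := by
          exact_mod_cast (k - 1).factorial_ne_zero
        field_simp
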